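/- Let K be a field, L/K a separable quadratic extension with Gal(L/K) = {1, σ}, and A a central simple algebra over L. The switch map s on A ⊗_L A^σ, defined on elementary tensors by s(a ⊗ b^σ) = b ⊗ a^σ and extended K-linearly, is a K-algebra automorphism of order 2, and its fixed subalgebra is a central simple K-algebra of K-dimension equal to (dim_L A)². -/

import Mathlib

set_option synthInstance.maxHeartbeats 1000000
set_option maxHeartbeats 1000000

open scoped TensorProduct



/-- In a simple ring, any nonzero element generates the unit ideal:
there is a finite list of pairs `(u, v)` with `∑ u * a * v = 1`. -/
lemma exists_list_sum_eq_one {R : Type*} [Ring R] [IsSimpleRing R] {a : R} (ha : a ≠ 0) :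
    ∃ l : List (R × R), (l.map fun p => p.1 * a * p.2).sum = 1 := by
  classical
  set carrier : Set R := {x | ∃ l : List (R × R), x = (l.map fun p => p.1 * a * p.2).sum}
    with hc
  have sum_neg : ∀ l : List (R × R),
      ((l.map fun p => (-p.1, p.2)).map fun p => p.1 * a * p.2).sum
        = -(l.map fun p => p.1 * a * p.2).sum := by
    intro l
    induction l with
    | nil => simp
    | cons hd tl ih =>
        simp only [List.map_cons, List.map_map, Function.comp_def, List.sum_cons] at ih ⊢
        rw [ih, neg_add]; simp [neg_mul]
  have sum_left : ∀ (x : R) (l : List (R × R)),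
      ((l.map fun p => (x * p.1, p.2)).map fun p => p.1 * a * p.2).sum
        = x * (l.map fun p => p.1 * a * p.2).sum := by
    intro x l
    induction l with
    | nil => simp
    | cons hd tl ih =>
        simp only [List.map_cons, List.map_map, Function.comp_def, List.sum_cons] at ih ⊢
        rw [ih, mul_add]; simp [mul_assoc]
  have sum_right : ∀ (x : R) (l : List (R × R)),
      ((l.map fun p => (p.1, p.2 * x)).map fun p => p.1 * a * p.2).sum
        = (l.map fun p => p.1 * a * p.2).sum * x := by
    intro x l
    induction l with
    | nil => simp
    | cons hd tl ih =>
        simp only [List.map_cons, List.map_map, Function.comp_def, List.sum_cons] at ih ⊢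
        rw [ih, add_mul]; simp [mul_assoc]
  let I : TwoSidedIdeal R := TwoSidedIdeal.mk' carrier
    ⟨[], by simp⟩
    (by rintro x y ⟨lx, rfl⟩ ⟨ly, rfl⟩; exact ⟨lx ++ ly, by simp⟩)
    (by rintro x ⟨lx, rfl⟩; exact ⟨lx.map fun p => (-p.1, p.2), (sum_neg lx).symm⟩)
    (by rintro x y ⟨ly, rfl⟩; exact ⟨ly.map fun p => (x * p.1, p.2), (sum_left x ly).symm⟩)
    (by rintro x y ⟨lx, rfl⟩; exact ⟨lx.map fun p => (p.1, p.2 * y), (sum_right y lx).symm⟩)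
  have haI : a ∈ I := by
    rw [TwoSidedIdeal.mem_mk']
    exact ⟨[(1, 1)], by simp⟩
  have h1 : (1 : R) ∈ I := IsSimpleRing.one_mem_of_ne_zero_mem I ha haI
  rw [TwoSidedIdeal.mem_mk'] at h1
  obtain ⟨l, hl⟩ := h1
  exact ⟨l, hl.symm⟩

section TensorCS

variable {L : Type*} [Field L] {A B : Type*} [Ring A] [Ring B] [Algebra L A] [Algebra L B]
variable {ι : Type*} [DecidableEq ι] (b : Module.Basis ι L B)

noncomputable def phiB : A ⊗[L] B ≃ₗ[L] (ι →₀ A) :=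
  (TensorProduct.congr (LinearEquiv.refl L A) b.repr).trans
    (TensorProduct.finsuppScalarRight L L A ι)

lemma phiB_tmul (x : A) (y : B) (i : ι) : phiB b (x ⊗ₜ[L] y) i = b.repr y i • x := by
  simp [phiB, TensorProduct.finsuppScalarRight_apply_tmul_apply]

lemma phiB_mul_left (u : A) (x : A ⊗[L] B) (i : ι) :
    phiB b ((u ⊗ₜ[L] (1 : B)) * x) i = u * phiB b x i := by
  induction x using TensorProduct.induction_on with
  | zero => simp
  | tmul a y =>
      rw [Algebra.TensorProduct.tmul_mul_tmul, phiB_tmul, phiB_tmul, one_mul, mul_smul_comm]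
  | add x y hx hy => rw [mul_add, map_add, Finsupp.add_apply, hx, hy, map_add, Finsupp.add_apply, mul_add]

lemma phiB_mul_right (v : A) (x : A ⊗[L] B) (i : ι) :
    phiB b (x * (v ⊗ₜ[L] (1 : B))) i = phiB b x i * v := by
  induction x using TensorProduct.induction_on with
  | zero => simp
  | tmul a y =>
      rw [Algebra.TensorProduct.tmul_mul_tmul, phiB_tmul, phiB_tmul, mul_one, smul_mul_assoc]
  | add x y hx hy => rw [add_mul, map_add, Finsupp.add_apply, hx, hy, map_add, Finsupp.add_apply, add_mul]

lemma eq_one_tmul_of_coords (x : A ⊗[L] B)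
    (h : ∀ i, ∃ μ : L, phiB b x i = algebraMap L A μ) :
    ∃ y : B, x = (1 : A) ⊗ₜ[L] y := by
  classical
  choose μ hμ using h
  refine ⟨∑ i ∈ (phiB b x).support, μ i • b i, (phiB b).injective ?_⟩
  ext j
  rw [phiB_tmul, map_sum]
  simp only [map_smul, Module.Basis.repr_self, Finsupp.smul_single, smul_eq_mul, mul_one]
  rw [Finsupp.finset_sum_apply]
  by_cases hj : j ∈ (phiB b x).support
  · rw [Finset.sum_eq_single j (fun i _ hij => Finsupp.single_eq_of_ne' hij)
      (fun h => absurd hj h), Finsupp.single_eq_same, hμ, Algebra.algebraMap_eq_smul_one]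
  · rw [Finset.sum_eq_zero (fun i hi => Finsupp.single_eq_of_ne' (fun hij => hj (by rwa [hij] at hi)))]
    rw [Finsupp.notMem_support_iff.1 hj, zero_smul]


lemma center_tensor_eq (z : A ⊗[L] B) [Nontrivial A]
    [Algebra.IsCentral L A] [Algebra.IsCentral L B]
    (hz : z ∈ Subalgebra.center L (A ⊗[L] B)) :
    ∃ μ : L, z = algebraMap L (A ⊗[L] B) μ := by
  classical
  let b := Module.Basis.ofVectorSpace L B
  rw [Subalgebra.mem_center_iff] at hz
  have hcomm : ∀ (a : A), ∀ i, a * phiB b z i = phiB b z i * a := by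
    intro a i
    have h := hz (a ⊗ₜ[L] (1 : B))
    have := congrArg (fun t => phiB b t i) h
    simpa only [phiB_mul_left, phiB_mul_right] using this
  have hcoord : ∀ i, ∃ μ : L, phiB b z i = algebraMap L A μ := by
    intro i
    have : phiB b z i ∈ Subalgebra.center L A :=
      Subalgebra.mem_center_iff.2 (fun a => hcomm a i)
    rw [Algebra.IsCentral.center_eq_bot, Algebra.mem_bot] at this
    obtain ⟨μ, hμ⟩ := this
    exact ⟨μ, hμ.symm⟩
  obtain ⟨y, rfl⟩ := eq_one_tmul_of_coords b z hcoord
  have hinj : Function.Injective (algebraMap L A) := RingHom.injective _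
  have hy : y ∈ Subalgebra.center L B := by
    rw [Subalgebra.mem_center_iff]
    intro u
    have h := hz ((1 : A) ⊗ₜ[L] u)
    rw [Algebra.TensorProduct.tmul_mul_tmul, Algebra.TensorProduct.tmul_mul_tmul,
      one_mul] at h
    have : ∀ w w' : B, (1 : A) ⊗ₜ[L] w = (1 : A) ⊗ₜ[L] w' → w = w' := by
      intro w w' hww
      have := fun i => congrArg (fun t => phiB b t i) hww
      simp only [phiB_tmul] at this
      apply b.repr.injective
      ext i
      exact hinj (by simpa only [Algebra.algebraMap_eq_smul_one] using this i)
    exact this _ _ h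
  rw [Algebra.IsCentral.center_eq_bot, Algebra.mem_bot] at hy
  obtain ⟨μ, rfl⟩ := hy
  refine ⟨μ, ?_⟩
  rw [Algebra.algebraMap_eq_smul_one, Algebra.algebraMap_eq_smul_one (A := A ⊗[L] B),
    TensorProduct.tmul_smul]
  rfl

lemma isSimpleRing_tensor' [Algebra.IsCentral L A] [IsSimpleRing A] [IsSimpleRing B] :
    IsSimpleRing (A ⊗[L] B) := by
  classical
  let b := Module.Basis.ofVectorSpace L B
  have hinjA : Function.Injective (algebraMap L A) := RingHom.injective _
  have hne : Nonempty (Module.Basis.ofVectorSpaceIndex L B) := b.index_nonempty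
  have : Nontrivial (A ⊗[L] B) := (phiB b).toEquiv.nontrivial
  apply IsSimpleRing.of_eq_bot_or_eq_top
  intro I
  rw [or_iff_not_imp_left]
  intro hI
  rw [← TwoSidedIdeal.one_mem_iff]
  -- find a nonzero element of I
  have hex : ∃ x, x ∈ I ∧ x ≠ 0 := by
    by_contra h
    push_neg at h
    exact hI (eq_bot_iff.2 fun x hx => (TwoSidedIdeal.mem_bot _).2 (h x hx))
  set S : Set ℕ := {n | ∃ x, x ∈ I ∧ x ≠ 0 ∧ ((phiB b x).support.card = n)} with hS
  have hSne : S.Nonempty := by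
    obtain ⟨x, hxI, hx0⟩ := hex
    exact ⟨_, x, hxI, hx0, rfl⟩
  obtain ⟨x₀, hx₀I, hx₀0, hx₀card⟩ := Nat.sInf_mem hSne
  have hmin : ∀ y, y ∈ I → y ≠ 0 → sInf S ≤ (phiB b y).support.card :=
    fun y hy hy0 => Nat.sInf_le ⟨y, hy, hy0, rfl⟩
  have hphix₀ : phiB b x₀ ≠ 0 := fun h => hx₀0 ((phiB b).map_eq_zero_iff.1 h)
  obtain ⟨i₀, hi₀⟩ := Finsupp.ne_iff.1 hphix₀
  rw [Finsupp.coe_zero, Pi.zero_apply] at hi₀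
  obtain ⟨l, hl⟩ := exists_list_sum_eq_one hi₀
  set x₁ : A ⊗[L] B :=
    (l.map fun p => (p.1 ⊗ₜ[L] (1 : B)) * x₀ * (p.2 ⊗ₜ[L] (1 : B))).sum with hx₁
  have hx₁I : x₁ ∈ I := by
    apply list_sum_mem
    intro z hz
    rw [List.mem_map] at hz
    obtain ⟨p, _, rfl⟩ := hz
    exact I.mul_mem_right _ _ (I.mul_mem_left _ _ hx₀I)
  have hcoord : ∀ i, phiB b x₁ i = (l.map fun p => p.1 * phiB b x₀ i * p.2).sum := by
    intro i
    have : phiB b x₁ i =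
        ((l.map fun p => (p.1 ⊗ₜ[L] (1 : B)) * x₀ * (p.2 ⊗ₜ[L] (1 : B))).map
          fun t => phiB b t i).sum := by
      rw [hx₁]
      exact (map_list_sum ((Finsupp.lapply i).comp (phiB b).toLinearMap :
        A ⊗[L] B →ₗ[L] A) _).symm ▸ rfl
    rw [this, List.map_map]
    congr 1
    apply List.map_congr_left
    intro p _
    show phiB b ((p.1 ⊗ₜ[L] (1:B)) * x₀ * (p.2 ⊗ₜ[L] (1:B))) i = _
    rw [phiB_mul_right, phiB_mul_left]
  have hx₁i₀ : phiB b x₁ i₀ = 1 := by rw [hcoord, hl]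
  have hx₁0 : x₁ ≠ 0 := by
    intro h
    rw [h] at hx₁i₀
    simp at hx₁i₀
  have hsupp₁ : (phiB b x₁).support ⊆ (phiB b x₀).support := by
    intro j hj
    rw [Finsupp.mem_support_iff] at hj ⊢
    intro h0
    apply hj
    rw [hcoord]
    apply List.sum_eq_zero
    intro z hz
    rw [List.mem_map] at hz
    obtain ⟨p, _, rfl⟩ := hz
    rw [h0, mul_zero, zero_mul]
  have hi₀supp : i₀ ∈ (phiB b x₁).support := Finsupp.mem_support_iff.2 (by rw [hx₁i₀]; exact one_ne_zero)
  -- every coordinate of x₁ is central in A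
  have hcent : ∀ i, ∃ μ : L, phiB b x₁ i = algebraMap L A μ := by
    intro i
    have hcomm : ∀ a : A, a * phiB b x₁ i = phiB b x₁ i * a := by
      intro a
      set y : A ⊗[L] B := (a ⊗ₜ[L] (1 : B)) * x₁ - x₁ * (a ⊗ₜ[L] (1 : B)) with hy
      have hyI : y ∈ I := I.sub_mem (I.mul_mem_left _ _ hx₁I) (I.mul_mem_right _ _ hx₁I)
      have hycoord : ∀ j, phiB b y j = a * phiB b x₁ j - phiB b x₁ j * a := by
        intro j
        rw [hy, map_sub, Finsupp.sub_apply, phiB_mul_left, phiB_mul_right]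
      have hy0 : y = 0 := by
        by_contra hy0
        have hle := hmin y hyI hy0
        have hsub : (phiB b y).support ⊆ (phiB b x₁).support.erase i₀ := by
          intro j hj
          rw [Finsupp.mem_support_iff] at hj
          rw [Finset.mem_erase]
          constructor
          · intro hji
            apply hj
            rw [hji, hycoord, hx₁i₀, mul_one, one_mul, sub_self]
          · rw [Finsupp.mem_support_iff]
            intro h0
            apply hj
            rw [hycoord, h0, mul_zero, zero_mul, sub_self]
        have hlt : (phiB b y).support.card < sInf S := by
          calc (phiB b y).support.card ≤ ((phiB b x₁).support.erase i₀).card :=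
                Finset.card_le_card hsub
            _ < (phiB b x₁).support.card := Finset.card_erase_lt_of_mem hi₀supp
            _ ≤ (phiB b x₀).support.card := Finset.card_le_card hsupp₁
            _ = sInf S := hx₀card
        omega
      have := hycoord i
      rw [hy0, map_zero, Finsupp.coe_zero, Pi.zero_apply] at this
      exact (sub_eq_zero.1 this.symm)
    have : phiB b x₁ i ∈ Subalgebra.center L A :=
      Subalgebra.mem_center_iff.2 (fun a => hcomm a)
    rw [Algebra.IsCentral.center_eq_bot, Algebra.mem_bot] at this
    obtain ⟨μ, hμ⟩ := this
    exact ⟨μ, hμ.symm⟩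
  obtain ⟨b0, hb0⟩ := eq_one_tmul_of_coords b x₁ hcent
  have hb00 : b0 ≠ 0 := by
    rintro rfl
    rw [TensorProduct.tmul_zero] at hb0
    exact hx₁0 hb0
  obtain ⟨l', hl'⟩ := exists_list_sum_eq_one hb00
  have hw : (l'.map fun q => ((1 : A) ⊗ₜ[L] q.1) * x₁ * ((1 : A) ⊗ₜ[L] q.2)).sum ∈ I := by
    apply list_sum_mem
    intro z hz
    rw [List.mem_map] at hz
    obtain ⟨q, _, rfl⟩ := hz
    exact I.mul_mem_right _ _ (I.mul_mem_left _ _ hx₁I)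
  have : (l'.map fun q => ((1 : A) ⊗ₜ[L] q.1) * x₁ * ((1 : A) ⊗ₜ[L] q.2)).sum
      = (1 : A) ⊗ₜ[L] (l'.map fun q => q.1 * b0 * q.2).sum := by
    have h2 : (1 : A) ⊗ₜ[L] (l'.map fun q => q.1 * b0 * q.2).sum
        = ((l'.map fun q => q.1 * b0 * q.2).map (TensorProduct.mk L A B 1)).sum :=
      map_list_sum (TensorProduct.mk L A B 1) _
    rw [h2, List.map_map]
    congr 1
    apply List.map_congr_left
    intro q _
    show ((1 : A) ⊗ₜ[L] q.1) * x₁ * ((1 : A) ⊗ₜ[L] q.2)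
        = TensorProduct.mk L A B 1 (q.1 * b0 * q.2)
    rw [TensorProduct.mk_apply, hb0, Algebra.TensorProduct.tmul_mul_tmul,
      Algebra.TensorProduct.tmul_mul_tmul, one_mul, one_mul]
  rw [this, hl'] at hw
  exact hw

end TensorCS

set_option maxHeartbeats 8000000 in
set_option synthInstance.maxHeartbeats 2000000 in
theorem stmt17_aux (K L : Type*) [Field K] [Field L] [Algebra K L]
    (hdim : Module.finrank K L = 2)
    (σ : L ≃ₐ[K] L) (l : L) (hl : σ l ≠ l)
    (A B : Type*) [Ring A] [Ring B] [Algebra L A] [Algebra L B]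
    [Algebra K A] [Algebra K B] [IsScalarTower K L A] [IsScalarTower K L B]
    [Algebra.IsCentral L A] [IsSimpleRing A] [FiniteDimensional L A]
    (e : B ≃+* A) (he : ∀ (l : L) (x : B), e (l • x) = σ l • e x)
    (s : A ⊗[L] B →ₗ[K] A ⊗[L] B)
    (hs : ∀ (x : A) (y : B), s (x ⊗ₜ[L] y) = e y ⊗ₜ[L] e.symm x) :
    (∀ u v : A ⊗[L] B, s (u * v) = s u * s v) ∧ s 1 = 1 ∧
    (∀ u : A ⊗[L] B, s (s u) = u) ∧
    ∃ C : Subalgebra K (A ⊗[L] B),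
      (∀ u, u ∈ C ↔ s u = u) ∧ Algebra.IsCentral K C ∧ IsSimpleRing C ∧
      Module.finrank K C = (Module.finrank L A)^2 := by
  classical
  haveI hKL : FiniteDimensional K L := FiniteDimensional.of_finrank_pos (by omega)
  -- {l, 1} is a K-basis of L
  have hli : LinearIndependent K ![l, (1 : L)] := by
    rw [linearIndependent_fin2]
    refine ⟨one_ne_zero, fun a ha => hl ?_⟩
    simp only [Matrix.cons_val_one, Matrix.head_cons, Matrix.cons_val_zero] at ha
    rw [← ha, map_smul, map_one]
  have hspan : Submodule.span K (Set.range ![l, (1 : L)]) = ⊤ :=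
    Submodule.eq_top_of_finrank_eq (by
      rw [finrank_span_eq_card hli, hdim]; simp)
  have hdecompL : ∀ μ : L, ∃ a c : K, μ = a • l + c • 1 := by
    intro μ
    have : μ ∈ Submodule.span K {l, (1 : L)} := by
      have : Set.range ![l, (1 : L)] = {l, (1 : L)} := by
        ext x
        simp only [Set.mem_range, Set.mem_insert_iff, Set.mem_singleton_iff]
        constructor
        · rintro ⟨i, rfl⟩
          fin_cases i <;> simp
        · rintro (rfl | rfl)
          exacts [⟨0, rfl⟩, ⟨1, rfl⟩]
      rw [← this, hspan]; trivial
    obtain ⟨a, c, h⟩ := Submodule.mem_span_pair.1 this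
    exact ⟨a, c, h.symm⟩
  -- fixed points of σ are in K
  have hKfix : ∀ μ : L, σ μ = μ → ∃ k : K, μ = algebraMap K L k := by
    intro μ hμ
    obtain ⟨a, c, rfl⟩ := hdecompL μ
    rw [map_add, map_smul, map_smul, map_one] at hμ
    have ha : a • σ l = a • l := by
      have h2 := hμ
      have : a • σ l + c • (1:L) - (c • (1:L)) = a • l + c • (1:L) - (c • (1:L)) := by
        rw [h2]
      simpa using this
    have h0 : a • (σ l - l) = 0 := by rw [smul_sub, ha, sub_self]
    rcases smul_eq_zero.1 h0 with h | h
    · exact ⟨c, by rw [h, zero_smul, zero_add, Algebra.algebraMap_eq_smul_one]⟩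
    · exact absurd (sub_eq_zero.1 h) hl
  -- σ is an involution
  obtain ⟨a₀, b₀, hll⟩ := hdecompL (l * l)
  have hroot : ∀ r r' : L, r * r = a₀ • r + b₀ • 1 → r' * r' = a₀ • r' + b₀ • 1 →
      r ≠ r' → r + r' = a₀ • 1 := by
    intro r r' h h' hne
    have key : (r - r') * (r + r' - a₀ • 1) = 0 := by
      have ha : a₀ • r = (a₀ • (1:L)) * r := by rw [smul_mul_assoc, one_mul]
      have ha' : a₀ • r' = (a₀ • (1:L)) * r' := by rw [smul_mul_assoc, one_mul]
      rw [ha] at h; rw [ha'] at h'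
      linear_combination h - h'
    rcases mul_eq_zero.1 key with h0 | h0
    · exact absurd (sub_eq_zero.1 h0) hne
    · exact sub_eq_zero.1 h0
  have hσl : σ l * σ l = a₀ • σ l + b₀ • 1 := by
    have := congrArg σ hll
    rwa [map_mul, map_add, map_smul, map_smul, map_one] at this
  have hσσl : σ (σ l) = l := by
    have hne2 : σ (σ l) ≠ σ l := fun h => hl (σ.injective h)
    have hσσl' : σ (σ l) * σ (σ l) = a₀ • σ (σ l) + b₀ • 1 := by
      have := congrArg σ hσl
      rwa [map_mul, map_add, map_smul, map_smul, map_one] at this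
    have h1 := hroot l (σ l) hll hσl (Ne.symm hl)
    have h2 := hroot (σ l) (σ (σ l)) hσl hσσl' (Ne.symm hne2)
    have : l + σ l = σ l + σ (σ l) := by rw [h1, h2]
    have := add_left_cancel (a := σ l) (b := l) (c := σ (σ l)) (by
      rw [add_comm (σ l) l]; exact this)
    exact this.symm
  have hσσ : ∀ x : L, σ (σ x) = x := by
    intro x
    obtain ⟨a, c, rfl⟩ := hdecompL x
    rw [map_add, map_smul, map_smul, map_one, map_add, map_smul, map_smul, map_one, hσσl]
  -- the twisted action on `e.symm`
  have he' : ∀ (μ : L) (x : A), e.symm (μ • x) = σ μ • e.symm x := by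
    intro μ x
    have h1 : e (σ μ • e.symm x) = μ • x := by
      rw [he, hσσ, e.apply_symm_apply]
    rw [← h1, e.symm_apply_apply]
  -- `s` is σ-semilinear
  have hsl : ∀ (μ : L) (u : A ⊗[L] B), s (μ • u) = σ μ • s u := by
    intro μ u
    induction u using TensorProduct.induction_on with
    | zero => rw [smul_zero, map_zero, smul_zero]
    | tmul x y =>
        rw [TensorProduct.smul_tmul', hs, hs, he', TensorProduct.tmul_smul]
    | add u v hu hv => rw [smul_add, map_add, hu, hv, map_add, smul_add]
  -- `s` is multiplicative
  have hmul : ∀ u v : A ⊗[L] B, s (u * v) = s u * s v := by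
    intro u v
    induction u using TensorProduct.induction_on with
    | zero => rw [zero_mul, map_zero, zero_mul]
    | tmul x y =>
        induction v using TensorProduct.induction_on with
        | zero => rw [mul_zero, map_zero, mul_zero]
        | tmul x' y' =>
            rw [Algebra.TensorProduct.tmul_mul_tmul, hs, hs, hs,
              Algebra.TensorProduct.tmul_mul_tmul, map_mul, map_mul]
        | add v₁ v₂ h1 h2 => rw [mul_add, map_add, h1, h2, map_add, mul_add]
    | add u₁ u₂ h1 h2 => rw [add_mul, map_add, h1, h2, map_add, add_mul]
  have hone : s 1 = 1 := by
    rw [Algebra.TensorProduct.one_def, hs, map_one, map_one]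
  have hss : ∀ u : A ⊗[L] B, s (s u) = u := by
    intro u
    induction u using TensorProduct.induction_on with
    | zero => rw [map_zero, map_zero]
    | tmul x y => rw [hs, hs, e.apply_symm_apply, e.symm_apply_apply]
    | add u v hu hv => rw [map_add, map_add, hu, hv]
  refine ⟨hmul, hone, hss, ?_⟩
  -- the fixed subalgebra
  let C : Subalgebra K (A ⊗[L] B) :=
  { carrier := {u | s u = u}
    mul_mem' := fun {u v} hu hv => by
      simp only [Set.mem_setOf_eq] at *
      rw [hmul, hu, hv]
    one_mem' := hone
    add_mem' := fun {u v} hu hv => by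
      simp only [Set.mem_setOf_eq] at *
      rw [map_add, hu, hv]
    zero_mem' := map_zero s
    algebraMap_mem' := fun k => by
      show s (algebraMap K (A ⊗[L] B) k) = _
      rw [Algebra.algebraMap_eq_smul_one, map_smul, hone] }
  have hCmem : ∀ u, u ∈ C ↔ s u = u := fun u => Iff.rfl
  -- transfer structure along `e` : B is a nontrivial simple ring
  haveI hBnt : Nontrivial B := e.toEquiv.nontrivial
  haveI hBsimple : IsSimpleRing B := by
    rw [IsSimpleRing.iff_injective_ringHom_or_subsingleton_codomain]
    intro S _ f
    rcases IsSimpleRing.injective_ringHom_or_subsingleton_codomain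
      (f.comp e.symm.toRingHom) with h | h
    · left
      intro x y hxy
      have hxy2 : (f.comp e.symm.toRingHom) (e x) = (f.comp e.symm.toRingHom) (e y) := by
        simpa using hxy
      exact e.injective (h hxy2)
    · right; exact h
  haveI hBcentral : Algebra.IsCentral L B := by
    constructor
    intro x hx
    rw [Subalgebra.mem_center_iff] at hx
    have hxA : e x ∈ Subalgebra.center L A := by
      rw [Subalgebra.mem_center_iff]
      intro a
      calc a * e x = e (e.symm a * x) := by rw [map_mul, e.apply_symm_apply]
        _ = e (x * e.symm a) := by rw [hx (e.symm a)]
        _ = e x * a := by rw [map_mul, e.apply_symm_apply]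
    rw [Algebra.IsCentral.center_eq_bot, Algebra.mem_bot] at hxA
    obtain ⟨μ, hμ⟩ := hxA
    have hxval : x = σ μ • 1 := by
      rw [← e.symm_apply_apply x, ← hμ, Algebra.algebraMap_eq_smul_one, he', map_one]
    exact Algebra.mem_bot.2 ⟨σ μ, by rw [hxval, Algebra.algebraMap_eq_smul_one]⟩
  -- dimensions
  have heK : ∀ (k : K) (x : B), e (k • x) = k • e x := by
    intro k x
    rw [← algebraMap_smul L k x, he, AlgEquiv.commutes, algebraMap_smul]
  let eK : B ≃ₗ[K] A := e.toAddEquiv.toLinearEquiv heK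
  haveI : FiniteDimensional K A := Module.Finite.trans L A
  haveI hFB : FiniteDimensional K B := Module.Finite.equiv eK.symm
  haveI : FiniteDimensional L B := FiniteDimensional.right K L B
  have hfrB : Module.finrank L B = Module.finrank L A := by
    have h1 : Module.finrank K L * Module.finrank L A = Module.finrank K A :=
      Module.finrank_mul_finrank K L A
    have h2 : Module.finrank K L * Module.finrank L B = Module.finrank K B :=
      Module.finrank_mul_finrank K L B
    have h3 : Module.finrank K B = Module.finrank K A := eK.finrank_eq
    rw [hdim] at h1 h2
    omega
  -- A ⊗[L] B is central simple over L
  haveI hTsimple : IsSimpleRing (A ⊗[L] B) := isSimpleRing_tensor'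
  haveI hTcentral : Algebra.IsCentral L (A ⊗[L] B) := by
    constructor
    intro z hz
    obtain ⟨μ, rfl⟩ := center_tensor_eq z hz
    exact Algebra.mem_bot.2 ⟨μ, rfl⟩
  have hl0 : l ≠ 0 := fun h => hl (by rw [h, map_zero])
  have hδ : l - σ l ≠ 0 := sub_ne_zero.2 (Ne.symm hl)
  -- decomposition T = C ⊕ l • C
  have hdecomp : ∀ t : A ⊗[L] B, ∃ c₁ c₂ : A ⊗[L] B,
      s c₁ = c₁ ∧ s c₂ = c₂ ∧ t = c₁ + l • c₂ := by
    intro t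
    set u := t + s t with hu
    set v := l • t + s (l • t) with hv
    have hufix : s u = u := by rw [hu, map_add, hss, add_comm]
    have hvfix : s v = v := by rw [hv, map_add, hss, add_comm]
    have hveq : v = l • t + σ l • s t := by rw [hv, hsl]
    clear_value u v
    have hkey : v - σ l • u = (l - σ l) • t := by
      rw [hveq, hu, smul_add, sub_smul]
      abel
    have ht : t = (l - σ l)⁻¹ • v + (-((l - σ l)⁻¹ * σ l)) • u := by
      have h2 : (l - σ l)⁻¹ • ((l - σ l) • t) = t := by
        rw [smul_smul, inv_mul_cancel₀ hδ, one_smul]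
      rw [← h2, ← hkey, smul_sub, smul_smul, neg_smul, ← sub_eq_add_neg]
    obtain ⟨p₁, p₂, hp⟩ := hdecompL ((l - σ l)⁻¹)
    obtain ⟨q₁, q₂, hq⟩ := hdecompL (-((l - σ l)⁻¹ * σ l))
    refine ⟨p₂ • v + q₂ • u, p₁ • v + q₁ • u, ?_, ?_, ?_⟩
    · rw [map_add, map_smul, map_smul, hvfix, hufix]
    · rw [map_add, map_smul, map_smul, hvfix, hufix]
    · rw [ht, hq, hp, add_smul, add_smul, smul_assoc, smul_assoc, smul_assoc, smul_assoc,
        one_smul, smul_add, smul_comm l p₁ v, smul_comm l q₁ u]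
      simp only [one_smul]
      abel
  have huniq : ∀ c₁ c₂ : A ⊗[L] B, s c₁ = c₁ → s c₂ = c₂ → c₁ + l • c₂ = 0 →
      c₁ = 0 ∧ c₂ = 0 := by
    intro c₁ c₂ h1 h2 h0
    have h3 : c₁ + σ l • c₂ = 0 := by
      have := congrArg s h0
      rwa [map_add, hsl, h1, h2, map_zero] at this
    have h4 : (l - σ l) • c₂ = 0 := by
      rw [sub_smul]
      calc l • c₂ - σ l • c₂ = (c₁ + l • c₂) - (c₁ + σ l • c₂) := by abel
        _ = 0 := by rw [h0, h3, sub_zero]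
    have hc₂ : c₂ = 0 := by
      have := congrArg (fun w => (l - σ l)⁻¹ • w) h4
      simpa [smul_smul, inv_mul_cancel₀ hδ] using this
    refine ⟨?_, hc₂⟩
    rw [hc₂, smul_zero, add_zero] at h0
    exact h0
  -- C is a simple ring
  haveI hTnt : Nontrivial (A ⊗[L] B) := inferInstance
  haveI hCnt : Nontrivial ↥C :=
    nontrivial_of_ne 1 0 (fun h => one_ne_zero (congrArg Subtype.val h))
  haveI hCsimple : IsSimpleRing ↥C := by
    apply IsSimpleRing.of_eq_bot_or_eq_top
    intro I
    rw [or_iff_not_imp_left]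
    intro hI
    rw [← TwoSidedIdeal.one_mem_iff]
    obtain ⟨i₀, hi₀I, hi₀0⟩ : ∃ x, x ∈ I ∧ x ≠ 0 := by
      by_contra h
      push_neg at h
      exact hI (eq_bot_iff.2 fun x hx => (TwoSidedIdeal.mem_bot _).2 (h x hx))
    set I' : Set (A ⊗[L] B) := Subtype.val '' {x : ↥C | x ∈ I} with hI'def
    have hI'0 : (0 : A ⊗[L] B) ∈ I' := ⟨0, I.zero_mem, rfl⟩
    have hI'add : ∀ {x y}, x ∈ I' → y ∈ I' → x + y ∈ I' := by
      rintro x y ⟨a, ha, rfl⟩ ⟨c, hc, rfl⟩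
      exact ⟨a + c, I.add_mem ha hc, rfl⟩
    have hI'neg : ∀ {x}, x ∈ I' → -x ∈ I' := by
      rintro x ⟨a, ha, rfl⟩
      exact ⟨-a, I.neg_mem ha, rfl⟩
    have hI'smulK : ∀ (k : K) {x}, x ∈ I' → k • x ∈ I' := by
      rintro k x ⟨a, ha, rfl⟩
      exact ⟨k • a, by rw [Algebra.smul_def]; exact I.mul_mem_left _ _ ha, rfl⟩
    have hI'fix : ∀ {x}, x ∈ I' → s x = x := by
      rintro x ⟨a, ha, rfl⟩
      exact a.2
    have hmulC : ∀ (d : A ⊗[L] B), s d = d → ∀ {x}, x ∈ I' → d * x ∈ I' ∧ x * d ∈ I' := by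
      rintro d hd x ⟨a, ha, rfl⟩
      exact ⟨⟨(⟨d, hd⟩ : ↥C) * a, I.mul_mem_left _ _ ha, rfl⟩,
        ⟨a * (⟨d, hd⟩ : ↥C), I.mul_mem_right _ _ ha, rfl⟩⟩
    set Dc : Set (A ⊗[L] B) := {x | ∃ c₁ ∈ I', ∃ c₂ ∈ I', x = c₁ + l • c₂} with hDcDef
    have hred : ∀ (x c : A ⊗[L] B), c ∈ I' →
        (∃ p ∈ I', ∃ q ∈ I', x * c = p + l • q) ∧
        (∃ p ∈ I', ∃ q ∈ I', c * x = p + l • q) := by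
      intro x c hc
      obtain ⟨d₁, d₂, hd₁, hd₂, rfl⟩ := hdecomp x
      constructor
      · refine ⟨d₁ * c, (hmulC d₁ hd₁ hc).1, d₂ * c, (hmulC d₂ hd₂ hc).1, ?_⟩
        rw [add_mul, smul_mul_assoc]
      · refine ⟨c * d₁, (hmulC d₁ hd₁ hc).2, c * d₂, (hmulC d₂ hd₂ hc).2, ?_⟩
        rw [mul_add, mul_smul_comm]
    have hcomb : ∀ p₁ q₁ p₂ q₂ : A ⊗[L] B, p₁ ∈ I' → q₁ ∈ I' → p₂ ∈ I' → q₂ ∈ I' →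
        ((p₁ + l • q₁) + l • (p₂ + l • q₂)) ∈ Dc := by
      intro p₁ q₁ p₂ q₂ hp₁ hq₁ hp₂ hq₂
      refine ⟨p₁ + b₀ • q₂, hI'add hp₁ (hI'smulK b₀ hq₂),
        q₁ + (p₂ + a₀ • q₂), hI'add hq₁ (hI'add hp₂ (hI'smulK a₀ hq₂)), ?_⟩
      have hllT : l • (l • q₂) = a₀ • (l • q₂) + b₀ • q₂ := by
        rw [smul_smul, hll, add_smul, smul_assoc, smul_assoc, one_smul]
      rw [smul_add l p₂ (l • q₂), hllT, smul_add, smul_add, smul_comm l a₀ q₂]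
      abel
    let D : TwoSidedIdeal (A ⊗[L] B) := TwoSidedIdeal.mk' Dc
      ⟨0, hI'0, 0, hI'0, by rw [smul_zero, add_zero]⟩
      (by rintro x y ⟨c₁, hc₁, c₂, hc₂, rfl⟩ ⟨d₁, hd₁, d₂, hd₂, rfl⟩
          exact ⟨c₁ + d₁, hI'add hc₁ hd₁, c₂ + d₂, hI'add hc₂ hd₂, by rw [smul_add]; abel⟩)
      (by rintro x ⟨c₁, hc₁, c₂, hc₂, rfl⟩
          exact ⟨-c₁, hI'neg hc₁, -c₂, hI'neg hc₂, by rw [smul_neg]; abel⟩)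
      (by rintro x y ⟨c₁, hc₁, c₂, hc₂, rfl⟩
          obtain ⟨p₁, hp₁, q₁, hq₁, h1⟩ := (hred x c₁ hc₁).1
          obtain ⟨p₂, hp₂, q₂, hq₂, h2⟩ := (hred x c₂ hc₂).1
          have hx : x * (c₁ + l • c₂) = (p₁ + l • q₁) + l • (p₂ + l • q₂) := by
            rw [mul_add, mul_smul_comm, h1, h2]
          exact hx ▸ hcomb p₁ q₁ p₂ q₂ hp₁ hq₁ hp₂ hq₂)
      (by rintro x y ⟨c₁, hc₁, c₂, hc₂, rfl⟩
          obtain ⟨p₁, hp₁, q₁, hq₁, h1⟩ := (hred y c₁ hc₁).2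
          obtain ⟨p₂, hp₂, q₂, hq₂, h2⟩ := (hred y c₂ hc₂).2
          have hx : (c₁ + l • c₂) * y = (p₁ + l • q₁) + l • (p₂ + l • q₂) := by
            rw [add_mul, smul_mul_assoc, h1, h2]
          exact hx ▸ hcomb p₁ q₁ p₂ q₂ hp₁ hq₁ hp₂ hq₂)
    have hival : ((i₀ : ↥C) : A ⊗[L] B) ≠ 0 := fun h => hi₀0 (Subtype.ext h)
    have hDmem : ((i₀ : ↥C) : A ⊗[L] B) ∈ D := by
      rw [TwoSidedIdeal.mem_mk']
      exact ⟨(i₀ : A ⊗[L] B), ⟨i₀, hi₀I, rfl⟩, 0, hI'0, by rw [smul_zero, add_zero]⟩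
    have h1D : (1 : A ⊗[L] B) ∈ D := IsSimpleRing.one_mem_of_ne_zero_mem D hival hDmem
    rw [TwoSidedIdeal.mem_mk'] at h1D
    obtain ⟨c₁, hc₁, c₂, hc₂, h1eq⟩ := h1D
    have h0 : (c₁ - 1) + l • c₂ = 0 := by
      have : (c₁ - 1) + l • c₂ = (c₁ + l • c₂) - 1 := by abel
      rw [this, ← h1eq, sub_self]
    obtain ⟨h01, h02⟩ := huniq (c₁ - 1) c₂
      (by rw [map_sub, hI'fix hc₁, hone]) (hI'fix hc₂) h0
    have hc₁1 : c₁ = 1 := by rwa [sub_eq_zero] at h01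
    obtain ⟨a, haI, hav⟩ := hc₁
    have ha1 : a = 1 := Subtype.ext (by rw [hav, hc₁1]; rfl)
    exact ha1 ▸ haI
  -- C is central over K
  haveI hCcentral : Algebra.IsCentral K ↥C := by
    constructor
    intro z hz
    rw [Subalgebra.mem_center_iff] at hz
    have hzT : (z : A ⊗[L] B) ∈ Subalgebra.center L (A ⊗[L] B) := by
      rw [Subalgebra.mem_center_iff]
      intro t
      obtain ⟨c₁, c₂, h1, h2, rfl⟩ := hdecomp t
      have k1 : c₁ * (z : A ⊗[L] B) = z * c₁ := congrArg Subtype.val (hz ⟨c₁, h1⟩)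
      have k2 : c₂ * (z : A ⊗[L] B) = z * c₂ := congrArg Subtype.val (hz ⟨c₂, h2⟩)
      rw [add_mul, mul_add, smul_mul_assoc, mul_smul_comm, k1, k2]
    rw [Algebra.IsCentral.center_eq_bot, Algebra.mem_bot] at hzT
    obtain ⟨μ, hμ⟩ := hzT
    have hfixz : s ((z : ↥C) : A ⊗[L] B) = (z : A ⊗[L] B) := z.2
    have hσμ : σ μ = μ := by
      have h2 : s ((z : ↥C) : A ⊗[L] B) = algebraMap L (A ⊗[L] B) (σ μ) := by
        rw [← hμ, Algebra.algebraMap_eq_smul_one, hsl, hone,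
          Algebra.algebraMap_eq_smul_one]
      rw [hfixz, ← hμ] at h2
      exact (RingHom.injective (algebraMap L (A ⊗[L] B)) h2.symm)
    obtain ⟨k, hk⟩ := hKfix μ hσμ
    refine Algebra.mem_bot.2 ⟨k, ?_⟩
    apply Subtype.ext
    show algebraMap K (A ⊗[L] B) k = (z : A ⊗[L] B)
    rw [← hμ, hk, ← IsScalarTower.algebraMap_apply K L (A ⊗[L] B)]
  -- dimension of C
  haveI : FiniteDimensional L (A ⊗[L] B) := Module.Finite.tensorProduct L A B
  haveI : FiniteDimensional K (A ⊗[L] B) := Module.Finite.trans L (A ⊗[L] B)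
  set C₀ : Submodule K (A ⊗[L] B) := Subalgebra.toSubmodule C with hC₀def
  let f : (A ⊗[L] B) →ₗ[K] (A ⊗[L] B) := (LinearMap.lsmul L (A ⊗[L] B) l).restrictScalars K
  have hfapp : ∀ x, f x = l • x := fun x => rfl
  have hfinj : Function.Injective f := by
    intro x y hxy
    have h2 : l • x = l • y := hxy
    have := congrArg (fun w => l⁻¹ • w) h2
    simpa [smul_smul, inv_mul_cancel₀ hl0] using this
  set D₀ : Submodule K (A ⊗[L] B) := Submodule.map f C₀ with hD₀def
  have hsup : C₀ ⊔ D₀ = ⊤ := by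
    rw [eq_top_iff]
    intro t _
    obtain ⟨c₁, c₂, h1, h2, rfl⟩ := hdecomp t
    exact Submodule.add_mem _ (Submodule.mem_sup_left (show c₁ ∈ C₀ from h1))
      (Submodule.mem_sup_right ⟨c₂, (show c₂ ∈ C₀ from h2), rfl⟩)
  have hinf : C₀ ⊓ D₀ = ⊥ := by
    rw [eq_bot_iff]
    rintro x ⟨hx1, c₂, hc₂, hfc⟩
    have h0 : (-x) + l • c₂ = 0 := by rw [← hfapp, hfc]; abel
    obtain ⟨h1, -⟩ := huniq (-x) c₂ (by rw [map_neg, (show s x = x from hx1)])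
      (show s c₂ = c₂ from hc₂) h0
    rw [Submodule.mem_bot]
    exact neg_eq_zero.1 h1
  have hrk := Submodule.finrank_sup_add_finrank_inf_eq C₀ D₀
  rw [hsup, hinf, finrank_top, finrank_bot, add_zero] at hrk
  have hD₀rk : Module.finrank K D₀ = Module.finrank K C₀ :=
    (LinearEquiv.finrank_eq (Submodule.equivMapOfInjective f hfinj C₀)).symm
  have hTrk : Module.finrank K (A ⊗[L] B) = 2 * (Module.finrank L A)^2 := by
    have h1 : Module.finrank K L * Module.finrank L (A ⊗[L] B) =
        Module.finrank K (A ⊗[L] B) := Module.finrank_mul_finrank K L _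
    have h2 : Module.finrank L (A ⊗[L] B) = Module.finrank L A * Module.finrank L B :=
      Module.finrank_tensorProduct
    rw [hdim, h2, hfrB] at h1
    rw [← h1]
    ring
  refine ⟨C, hCmem, hCcentral, hCsimple, ?_⟩
  have hCC₀ : Module.finrank K ↥C = Module.finrank K C₀ := rfl
  rw [hTrk, hD₀rk] at hrk
  set m := (Module.finrank L A)^2
  omega

/-- Let `L/K` be a separable quadratic extension with nontrivial automorphism `σ`, `A` a
central simple `L`-algebra and `B = A^σ` its `σ`-twist (same ring, `L` acting through
`σ`, identified with `A` via the ring isomorphism `e`). The switch map `s` on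
`A ⊗_L A^σ`, given by `s(a ⊗ b^σ) = b ⊗ a^σ`, is a `K`-algebra automorphism of order 2,
and its fixed subalgebra is a central simple `K`-algebra of dimension `(dim_L A)²`
over `K`. -/
theorem stmt17 (K L : Type*) [Field K] [Field L] [Algebra K L]
    [Algebra.IsSeparable K L] (hdim : Module.finrank K L = 2)
    (σ : L ≃ₐ[K] L) (hσ : ∃ l, σ l ≠ l)
    (A B : Type*) [Ring A] [Ring B] [Algebra L A] [Algebra L B]
    [Algebra K A] [Algebra K B] [IsScalarTower K L A] [IsScalarTower K L B]
    [Algebra.IsCentral L A] [IsSimpleRing A] [FiniteDimensional L A]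
    (e : B ≃+* A) (he : ∀ (l : L) (x : B), e (l • x) = σ l • e x)
    (s : A ⊗[L] B →ₗ[K] A ⊗[L] B)
    (hs : ∀ (x : A) (y : B), s (x ⊗ₜ[L] y) = e y ⊗ₜ[L] e.symm x) :
    (∀ u v : A ⊗[L] B, s (u * v) = s u * s v) ∧ s 1 = 1 ∧
    (∀ u : A ⊗[L] B, s (s u) = u) ∧
    ∃ C : Subalgebra K (A ⊗[L] B),
      (∀ u, u ∈ C ↔ s u = u) ∧ Algebra.IsCentral K C ∧ IsSimpleRing C ∧
      Module.finrank K C = (Module.finrank L A)^2 := by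
  obtain ⟨l, hl⟩ := hσ
  exact stmt17_aux K L hdim σ l hl A B e he s hs
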